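/- With the damped characteristic ODE Ẋ = V, V̇ = u(t,X) − V, assume B(a,ε) ⊂ Ω with d(B̄(a,ε), ∂Ω) > 0, 2R < d(B̄(a,ε), ∂Ω), and set δ = (d(B̄(a,ε),∂Ω)/2 − R)/2. If ‖u‖_{L¹(ℝ⁺;L^∞)} ≤ δ, then for all T ≥ 0 and all (x,v) ∈ B(a,ε) × B(0,R), the trajectory satisfies X(T;0,x,v) ∈ B(a, ε + R + 2δ), and this ball is strictly contained in Ω. -/

import Mathlib

open MeasureTheory Set

abbrev E3 := EuclideanSpace ℝ (Fin 3)

/-- Confinement lemma: if `B(a,ε) ⊆ Ω`, the distance `d` from `B̄(a,ε)` to `∂Ω` is positive,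
`2R < d`, `δ = (d/2 − R)/2`, and `‖u‖_{L¹(ℝ⁺;L^∞)} ≤ δ`, then every characteristic of
`Ẋ = V`, `V̇ = u − V` starting in `B(a,ε) × B(0,R)` satisfies `X(T) ∈ B(a, ε+R+2δ)` for
all `T ≥ 0`, and this ball is strictly contained in `Ω`. -/
theorem stmt11 (Ω : Set E3) (hΩo : IsOpen Ω) (hΩb : Bornology.IsBounded Ω)
    (a : E3) (ε R d : ℝ) (hε : 0 < ε) (hR : 0 < R)
    (hball : Metric.ball a ε ⊆ Ω)
    (hd : 0 < d)
    (hdist : ∀ y ∈ Metric.closedBall a ε, ∀ z ∈ frontier Ω, d ≤ dist y z)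
    (h2R : 2 * R < d)
    (δ : ℝ) (hδ : δ = (d / 2 - R) / 2)
    (u : ℝ → E3 → E3) (ub : ℝ → ℝ) (hub0 : ∀ t, 0 ≤ ub t)
    (hub : ∀ t y, ‖u t y‖ ≤ ub t) (hubint : IntegrableOn ub (Ioi (0:ℝ)))
    (husmall : ∫ s in Ioi (0:ℝ), ub s ≤ δ)
    (X V : ℝ → E3 → E3 → E3)
    (hX0 : ∀ x v, X 0 x v = x) (hV0 : ∀ x v, V 0 x v = v)
    (hXd : ∀ x v, ∀ t ≥ (0:ℝ), HasDerivAt (fun s => X s x v) (V t x v) t)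
    (hVd : ∀ x v, ∀ t ≥ (0:ℝ), HasDerivAt (fun s => V s x v) (u t (X t x v) - V t x v) t) :
    (∀ T ≥ (0:ℝ), ∀ x ∈ Metric.ball a ε, ∀ v ∈ Metric.ball (0:E3) R,
        X T x v ∈ Metric.ball a (ε + R + 2 * δ)) ∧
      Metric.ball a (ε + R + 2 * δ) ⊂ Ω := by
  have hδpos : 0 < δ := by rw [hδ]; linarith
  have hrad : ε + R + 2 * δ = ε + d / 2 := by rw [hδ]; ring
  -- distance from a to any frontier point is at least ε + d
  have hfront : ∀ z ∈ frontier Ω, ε + d ≤ dist a z := by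
    intro z hz
    by_cases hle : dist a z ≤ ε
    · exfalso
      have := hdist z (Metric.mem_closedBall.2 (by rwa [dist_comm])) z hz
      simp at this; linarith
    · push_neg at hle
      set t : ℝ := ε / dist a z with ht
      have hdaz : 0 < dist a z := lt_trans hε hle
      have ht0 : 0 < t := div_pos hε hdaz
      have ht1 : t < 1 := (div_lt_one hdaz).2 hle
      set y : E3 := a + t • (z - a) with hy
      have hya : dist y a = ε := by
        rw [dist_eq_norm]
        simp only [hy, add_sub_cancel_left, norm_smul, Real.norm_eq_abs,
          abs_of_pos ht0]
        rw [ht, ← dist_eq_norm z a, dist_comm z a]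
        field_simp
      have hyz : dist y z = dist a z - ε := by
        rw [dist_eq_norm]
        have : y - z = (t - 1) • (z - a) := by
          simp only [hy]; module
        rw [this, norm_smul, Real.norm_eq_abs, abs_of_neg (by linarith), ← dist_eq_norm z a,
          dist_comm z a]
        field_simp [ht]
        have htd : t * dist a z = ε := by rw [ht]; exact div_mul_cancel₀ _ hdaz.ne'
        clear_value y t
        linear_combination (-1 : ℝ) * htd
      have := hdist y (Metric.mem_closedBall.2 hya.le) z hz
      linarith [this, hyz]
  constructor
  · intro T hT x hx v hv
    set f : ℝ → E3 := fun t => X t x v with hf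
    set Vf : ℝ → E3 := fun t => V t x v with hVf
    set h : ℝ → E3 := fun t => u t (f t) with hh
    set g : ℝ → E3 := fun t => f t + Vf t with hg
    have hgd : ∀ t ≥ (0:ℝ), HasDerivAt g (h t) t := by
      intro t ht
      have := (hXd x v t ht).add (hVd x v t ht)
      exact this.congr_deriv (by simp only [hh, hf]; abel)
    have hWd : ∀ t ≥ (0:ℝ),
        HasDerivAt (fun s => Real.exp s • Vf s) (Real.exp t • h t) t := by
      intro t ht
      have := (Real.hasDerivAt_exp t).smul (hVd x v t ht)
      exact this.congr_deriv (by simp [hh, hf, smul_sub])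
    -- measurability of h on Ioc 0 T
    have hmeas : AEStronglyMeasurable h (volume.restrict (Ioc 0 T)) := by
      refine (stronglyMeasurable_deriv g).aestronglyMeasurable.restrict.congr ?_
      filter_upwards [ae_restrict_mem measurableSet_Ioc] with t ht
      exact ((hgd t ht.1.le).deriv)
    have hubIoc : IntegrableOn ub (Ioc 0 T) := hubint.mono_set Ioc_subset_Ioi_self
    have hint : IntegrableOn h (Ioc 0 T) :=
      hubIoc.mono' hmeas (ae_of_all _ fun t => hub t (f t))
    have heint : IntegrableOn (fun s => Real.exp s • h s) (Ioc 0 T) := by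
      refine (hubIoc.const_mul (Real.exp T)).mono'
        (((Real.continuous_exp.aestronglyMeasurable).restrict).smul hmeas) ?_
      filter_upwards [ae_restrict_mem measurableSet_Ioc] with s hs
      rw [norm_smul, Real.norm_eq_abs, abs_of_pos (Real.exp_pos s)]
      exact mul_le_mul (Real.exp_le_exp.2 hs.2) (hub s (f s)) (norm_nonneg _)
        (Real.exp_pos T).le
    have hII : IntervalIntegrable h volume 0 T :=
      (intervalIntegrable_iff_integrableOn_Ioc_of_le hT).2 hint
    have heII : IntervalIntegrable (fun s => Real.exp s • h s) volume 0 T :=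
      (intervalIntegrable_iff_integrableOn_Ioc_of_le hT).2 heint
    have hubII : IntervalIntegrable ub volume 0 T :=
      (intervalIntegrable_iff_integrableOn_Ioc_of_le hT).2 hubIoc
    -- FTC
    have key1 : ∫ t in (0:ℝ)..T, h t = g T - g 0 := by
      refine intervalIntegral.integral_eq_sub_of_hasDerivAt (fun t ht => ?_) hII
      rw [uIcc_of_le hT] at ht
      exact hgd t ht.1
    have key2 : ∫ t in (0:ℝ)..T, Real.exp t • h t = Real.exp T • Vf T - v := by
      have := intervalIntegral.integral_eq_sub_of_hasDerivAt (f := fun s => Real.exp s • Vf s)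
        (fun t ht => by rw [uIcc_of_le hT] at ht; exact hWd t ht.1) heII
      rw [this]
      simp [hVf, hV0]
    -- ∫₀ᵀ ub ≤ δ
    have hub_le : ∫ t in (0:ℝ)..T, ub t ≤ δ := by
      rw [intervalIntegral.integral_of_le hT]
      refine le_trans (setIntegral_mono_set hubint (ae_of_all _ hub0)
        (HasSubset.Subset.eventuallyLE Ioc_subset_Ioi_self)) husmall
    -- bound 1
    have I1 : ‖∫ t in (0:ℝ)..T, h t‖ ≤ δ := by
      refine le_trans (intervalIntegral.norm_integral_le_integral_norm hT) ?_
      refine le_trans (intervalIntegral.integral_mono_on hT hII.norm hubII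
        (fun t _ => hub t (f t))) hub_le
    -- bound 2 : ‖v - Vf T‖ < R + δ
    have hexpT : (0:ℝ) < Real.exp T := Real.exp_pos T
    have hVT : Vf T = Real.exp (-T) • (v + ∫ t in (0:ℝ)..T, Real.exp t • h t) := by
      rw [key2, Real.exp_neg]
      rw [smul_add, smul_sub, smul_smul, inv_mul_cancel₀ (ne_of_gt hexpT), one_smul]
      abel
    have I2 : ‖v - Vf T‖ < R + δ := by
      have hsplit : v - Vf T = (1 - Real.exp (-T)) • v
          - Real.exp (-T) • ∫ t in (0:ℝ)..T, Real.exp t • h t := by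
        rw [hVT]; rw [smul_add]; module
      rw [hsplit]
      have h1 : ‖(1 - Real.exp (-T)) • v‖ < R := by
        rw [norm_smul, Real.norm_eq_abs]
        have he1 : Real.exp (-T) ≤ 1 := Real.exp_le_one_iff.2 (by linarith)
        have he0 : 0 < Real.exp (-T) := Real.exp_pos _
        rw [abs_of_nonneg (by linarith)]
        calc (1 - Real.exp (-T)) * ‖v‖ ≤ 1 * ‖v‖ :=
              mul_le_mul_of_nonneg_right (by linarith) (norm_nonneg v)
          _ = ‖v‖ := one_mul _
          _ < R := by simpa using hv
      have h2 : ‖Real.exp (-T) • ∫ t in (0:ℝ)..T, Real.exp t • h t‖ ≤ δ := by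
        rw [norm_smul, Real.norm_eq_abs, abs_of_pos (Real.exp_pos _)]
        calc Real.exp (-T) * ‖∫ t in (0:ℝ)..T, Real.exp t • h t‖
            ≤ Real.exp (-T) * ∫ t in (0:ℝ)..T, ‖Real.exp t • h t‖ :=
              mul_le_mul_of_nonneg_left
                (le_trans (intervalIntegral.norm_integral_le_integral_norm hT) le_rfl)
                (Real.exp_pos _).le
          _ = ∫ t in (0:ℝ)..T, Real.exp (-T) * ‖Real.exp t • h t‖ := by
              rw [← intervalIntegral.integral_const_mul]
          _ ≤ ∫ t in (0:ℝ)..T, ub t := by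
              refine intervalIntegral.integral_mono_on hT
                ((intervalIntegrable_iff_integrableOn_Ioc_of_le hT).2 ?_) hubII
                (fun t htt => ?_)
              · exact (heint.norm.const_mul _)
              · rw [norm_smul, Real.norm_eq_abs, abs_of_pos (Real.exp_pos _)]
                have hTt : -T + t = t - T := by ring
                rw [← mul_assoc, ← Real.exp_add, hTt]
                calc Real.exp (t - T) * ‖h t‖ ≤ 1 * ‖h t‖ :=
                      mul_le_mul_of_nonneg_right
                        (Real.exp_le_one_iff.2 (by linarith [htt.2])) (norm_nonneg _)
                  _ = ‖h t‖ := one_mul _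
                  _ ≤ ub t := hub t (f t)
          _ ≤ δ := hub_le
      calc ‖(1 - Real.exp (-T)) • v - Real.exp (-T) • ∫ t in (0:ℝ)..T, Real.exp t • h t‖
          ≤ ‖(1 - Real.exp (-T)) • v‖ + ‖Real.exp (-T) • ∫ t in (0:ℝ)..T, Real.exp t • h t‖ :=
            norm_sub_le _ _
        _ < R + δ := by linarith
    -- conclude
    have hdecomp : f T - a = (x - a) + (v - Vf T) + ∫ t in (0:ℝ)..T, h t := by
      rw [key1]
      simp only [hg, hf, hVf, hX0, hV0]
      abel
    rw [Metric.mem_ball, dist_eq_norm]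
    have : ‖f T - a‖ < ε + (R + δ) + δ := by
      rw [hdecomp]
      have hxa : ‖x - a‖ < ε := by rw [← dist_eq_norm]; exact hx
      calc ‖(x - a) + (v - Vf T) + ∫ t in (0:ℝ)..T, h t‖
          ≤ ‖x - a‖ + ‖v - Vf T‖ + ‖∫ t in (0:ℝ)..T, h t‖ := norm_add₃_le
        _ < ε + (R + δ) + δ := by linarith
    calc ‖f T - a‖ < ε + (R + δ) + δ := this
      _ = ε + R + 2 * δ := by ring
  · rw [hrad]
    have hsub : Metric.ball a (ε + d / 2) ⊆ Ω := by
      have hdisj : Disjoint (frontier Ω) (Metric.ball a (ε + d / 2)) := by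
        rw [Set.disjoint_left]
        intro z hz hzb
        have := hfront z hz
        rw [Metric.mem_ball, dist_comm] at hzb
        linarith
      have hclopen := isClopen_preimage_val hΩo hdisj
      have hconn : IsPreconnected (Metric.ball a (ε + d / 2)) :=
        (convex_ball a (ε + d / 2)).isPreconnected
      haveI : PreconnectedSpace (Metric.ball a (ε + d / 2)) :=
        Subtype.preconnectedSpace hconn
      have ha : a ∈ Metric.ball a (ε + d / 2) := Metric.mem_ball_self (by linarith)
      have hane : (⟨a, ha⟩ : Metric.ball a (ε + d / 2)) ∈
          Subtype.val ⁻¹' Ω := by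
        show a ∈ Ω
        exact hball (Metric.mem_ball_self hε)
      have huniv := hclopen.eq_univ ⟨_, hane⟩
      intro y hy
      have hy2 : (⟨y, hy⟩ : Metric.ball a (ε + d / 2)) ∈ (univ : Set _) := mem_univ _
      rw [← huniv] at hy2
      exact hy2
    refine ⟨hsub, fun hΩsub => ?_⟩
    -- strictness: find a point of Ω outside the ball
    have hne : (frontier Ω).Nonempty := by
      rw [nonempty_frontier_iff]
      refine ⟨⟨a, hball (Metric.mem_ball_self hε)⟩, fun huniv => ?_⟩
      exact NormedSpace.unbounded_univ ℝ E3 (huniv ▸ hΩb)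
    obtain ⟨z, hz⟩ := hne
    have hzd : ε + d ≤ dist a z := hfront z hz
    have hzcl : z ∈ closure Ω := hz.1
    obtain ⟨w, hw, hwz⟩ := Metric.mem_closure_iff.1 hzcl (d / 4) (by linarith)
    have hwball := hΩsub hw
    rw [Metric.mem_ball] at hwball
    have h1 : dist a w < ε + d / 2 := by rw [dist_comm]; exact hwball
    have h2 : dist w z < d / 4 := by rw [dist_comm]; exact hwz
    linarith [dist_triangle a w z]
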